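/- Let f : ℝⁿ → ℝ ∪ {+∞} be a proper, lsc, convex, symmetric function, λ : Sⁿ → ℝⁿ the ordered eigenvalue map on symmetric matrices. Then the recession functions satisfy (f ∘ λ)^∞ = f^∞ ∘ λ, where for a proper lsc convex function g, g^∞(v) := sup_{t>0}(g(x₀ + tv) − g(x₀))/t for any x₀ ∈ dom g. -/

import Mathlib

open Set Topology Filter Matrix

/-- The eigenvalues of a real symmetric matrix arranged in non-increasing order. -/
noncomputable def eigVec {n : ℕ} (A : Matrix (Fin n) (Fin n) ℝ) (hA : A.IsHermitian) :
    Fin n → ℝ :=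
  fun i => (hA.eigenvalues ∘ (Tuple.sort hA.eigenvalues)) i.rev

/-- The spectral function `F = f ∘ λ`, extended by `+∞` off the symmetric matrices. -/
noncomputable def specFun {n : ℕ} (f : (Fin n → ℝ) → EReal)
    (A : Matrix (Fin n) (Fin n) ℝ) : EReal :=
  if h : A.IsHermitian then f (eigVec A h) else ⊤

namespace Spec
variable {n : ℕ}

/-- partial sum of first k coordinates -/
def psum (k : ℕ) (x : Fin n → ℝ) : ℝ :=
  ∑ i ∈ Finset.univ.filter (fun i : Fin n => (i : ℕ) < k), x i

/-- the sorting permutation: eigVec = eigenvalues ∘ σ -/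
noncomputable def sortPerm {A : Matrix (Fin n) (Fin n) ℝ} (hA : A.IsHermitian) :
    Equiv.Perm (Fin n) :=
  (Fin.revPerm).trans (Tuple.sort hA.eigenvalues)

lemma eigVec_eq {A : Matrix (Fin n) (Fin n) ℝ} (hA : A.IsHermitian) :
    eigVec A hA = hA.eigenvalues ∘ (sortPerm hA) := rfl

lemma eigVec_antitone {A : Matrix (Fin n) (Fin n) ℝ} (hA : A.IsHermitian) :
    Antitone (eigVec A hA) := by
  intro a b hab
  exact Tuple.monotone_sort hA.eigenvalues (by simpa using Fin.rev_le_rev.mpr hab)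

lemma filter_lt_eq_map {k : ℕ} (hk : k ≤ n) :
    Finset.univ.filter (fun i : Fin n => (i : ℕ) < k)
      = Finset.univ.map (Fin.castLEEmb hk) := by
  ext j
  simp only [Finset.mem_filter, Finset.mem_univ, true_and, Finset.mem_map]
  constructor
  · intro hj; exact ⟨⟨j, hj⟩, rfl⟩
  · rintro ⟨i, rfl⟩
    exact i.2

lemma psum_eq_sum_castLE {k : ℕ} (hk : k ≤ n) (x : Fin n → ℝ) :
    psum k x = ∑ j : Fin k, x (Fin.castLE hk j) := by
  rw [psum, filter_lt_eq_map hk, Finset.sum_map]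
  rfl

lemma psum_succ (l : Fin n) (x : Fin n → ℝ) :
    psum (l + 1) x = psum l x + x l := by
  have h : Finset.univ.filter (fun i : Fin n => (i : ℕ) < (l : ℕ) + 1)
      = insert l (Finset.univ.filter (fun i : Fin n => (i : ℕ) < (l : ℕ))) := by
    ext j
    simp only [Finset.mem_filter, Finset.mem_univ, true_and, Finset.mem_insert]
    constructor
    · intro hj
      rcases Nat.lt_succ_iff_lt_or_eq.mp hj with h | h
      · exact Or.inr h
      · exact Or.inl (Fin.ext h)
    · rintro (rfl | hj); · omega
      · omega
  rw [psum, h, Finset.sum_insert (by simp), psum]; ring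


lemma card_filter_lt {k : ℕ} (hk : k ≤ n) :
    (Finset.univ.filter (fun i : Fin n => (i : ℕ) < k)).card = k := by
  rw [filter_lt_eq_map hk, Finset.card_map, Finset.card_univ, Fintype.card_fin]

lemma knapsack {k : ℕ} (hk : k ≤ n) (e t : Fin n → ℝ) (he : Antitone e)
    (h0 : ∀ i, 0 ≤ t i) (h1 : ∀ i, t i ≤ 1) (hsum : ∑ i, t i = k) :
    ∑ i, e i * t i ≤ psum k e := by
  rcases eq_or_lt_of_le hk with heq | hkn
  · subst heq
    have hone : ∀ i, t i = 1 := by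
      by_contra h
      push_neg at h
      obtain ⟨i, hi⟩ := h
      have h2 : ∑ i, t i < ∑ _i : Fin k, (1:ℝ) :=
        Finset.sum_lt_sum (fun j _ => h1 j) ⟨i, Finset.mem_univ i, lt_of_le_of_ne (h1 i) hi⟩
      rw [hsum] at h2
      simp at h2
    have hps : psum k e = ∑ i, e i := by
      rw [psum, Finset.filter_true_of_mem]
      intro i _; exact i.2
    rw [hps]
    apply Finset.sum_le_sum
    intro i _
    rw [hone i, mul_one]
  · set piv : Fin n := ⟨k, hkn⟩ with hpiv
    set S := Finset.univ.filter (fun i : Fin n => (i : ℕ) < k) with hS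
    set T := Finset.univ.filter (fun i : Fin n => ¬ (i : ℕ) < k) with hT
    have hsplit : ∑ i, e i * t i = (∑ i ∈ S, e i * t i) + ∑ i ∈ T, e i * t i :=
      (Finset.sum_filter_add_sum_filter_not _ _ _).symm
    have htsplit : (∑ i ∈ S, t i) + ∑ i ∈ T, t i = (k:ℝ) := by
      rw [Finset.sum_filter_add_sum_filter_not, hsum]
    have c1 : ∑ i ∈ S, e i * t i ≤ (∑ i ∈ S, e i) + e piv * (∑ i ∈ S, t i) - e piv * k := by
      have : ∑ i ∈ S, e i * t i ≤ ∑ i ∈ S, (e i + e piv * t i - e piv) := by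
        apply Finset.sum_le_sum
        intro i hi
        rw [hS, Finset.mem_filter] at hi
        have hie : e piv ≤ e i := he (by simp [hpiv, Fin.le_def]; omega)
        nlinarith [mul_nonneg (sub_nonneg.mpr hie) (sub_nonneg.mpr (h1 i))]
      calc ∑ i ∈ S, e i * t i ≤ ∑ i ∈ S, (e i + e piv * t i - e piv) := this
        _ = (∑ i ∈ S, e i) + e piv * (∑ i ∈ S, t i) - e piv * k := by
            have hcard : S.card = k := card_filter_lt hkn.le
            rw [Finset.sum_sub_distrib, Finset.sum_add_distrib, Finset.sum_const, hcard,
              nsmul_eq_mul, ← Finset.mul_sum]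
            ring
    have c2 : ∑ i ∈ T, e i * t i ≤ e piv * ∑ i ∈ T, t i := by
      rw [Finset.mul_sum]
      apply Finset.sum_le_sum
      intro i hi
      rw [hT, Finset.mem_filter] at hi
      have hie : e i ≤ e piv := he (by simp [hpiv, Fin.le_def]; omega)
      exact mul_le_mul_of_nonneg_right hie (h0 i)
    have : psum k e = ∑ i ∈ S, e i := rfl
    rw [this, hsplit]
    have hmul : e piv * (∑ i ∈ S, t i) + e piv * (∑ i ∈ T, t i) = e piv * k := by
      rw [← mul_add, htsplit]
    linarith [c1, c2]


lemma trace_bound {k : ℕ} (hk : k ≤ n) (M : Matrix (Fin n) (Fin n) ℝ) (hM : M.IsHermitian)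
    (U : Matrix (Fin n) (Fin k) ℝ) (hU : Uᴴ * U = 1) :
    (Uᴴ * M * U).trace ≤ psum k (eigVec M hM) := by
  set W : Matrix (Fin n) (Fin n) ℝ := (hM.eigenvectorUnitary : Matrix (Fin n) (Fin n) ℝ) with hW
  have hWW : W * Wᴴ = 1 := (Matrix.mem_unitaryGroup_iff).mp hM.eigenvectorUnitary.2
  have hWW' : Wᴴ * W = 1 := (Matrix.mem_unitaryGroup_iff').mp hM.eigenvectorUnitary.2
  have hMspec : M = W * diagonal hM.eigenvalues * Wᴴ := by
    have h := hM.spectral_theorem; simp at h; exact h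
  set Y : Matrix (Fin n) (Fin k) ℝ := Wᴴ * U with hY
  have hYY : Yᴴ * Y = 1 := by
    rw [hY, Matrix.conjTranspose_mul, Matrix.conjTranspose_conjTranspose]
    calc Uᴴ * W * (Wᴴ * U) = Uᴴ * (W * Wᴴ) * U := by
          rw [Matrix.mul_assoc, Matrix.mul_assoc, Matrix.mul_assoc]
      _ = 1 := by rw [hWW, Matrix.mul_one, hU]
  set s : Fin n → ℝ := fun i => ∑ j, (Y i j)^2 with hs
  -- trace identity
  have htr : (Uᴴ * M * U).trace = ∑ i, hM.eigenvalues i * s i := by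
    have h1 : Uᴴ * M * U = Yᴴ * (diagonal hM.eigenvalues * Y) := by
      calc Uᴴ * M * U = Uᴴ * (W * diagonal hM.eigenvalues * Wᴴ) * U := by rw [← hMspec]
        _ = (Uᴴ * W) * (diagonal hM.eigenvalues * (Wᴴ * U)) := by
            simp only [Matrix.mul_assoc]
        _ = Yᴴ * (diagonal hM.eigenvalues * Y) := by
            rw [hY, Matrix.conjTranspose_mul, Matrix.conjTranspose_conjTranspose]
    rw [h1, Matrix.trace]
    simp only [Matrix.diag_apply, Matrix.mul_apply, Matrix.conjTranspose_apply,
      Matrix.diagonal_apply, star_trivial, Finset.sum_ite_eq, Finset.mem_univ, if_pos,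
      ite_mul, zero_mul]
    rw [Finset.sum_comm]
    apply Finset.sum_congr rfl
    intro i _
    rw [hs, Finset.mul_sum]
    apply Finset.sum_congr rfl
    intro j _
    ring
  -- bounds on s
  have hs0 : ∀ i, 0 ≤ s i := fun i => Finset.sum_nonneg fun j _ => sq_nonneg _
  have hssum : ∑ i, s i = (k:ℝ) := by
    have h2 : ∑ i, s i = (Yᴴ * Y).trace := by
      rw [Matrix.trace]
      simp only [Matrix.diag_apply, Matrix.mul_apply, Matrix.conjTranspose_apply, star_trivial]
      rw [Finset.sum_comm]
      exact Finset.sum_congr rfl fun j _ => Finset.sum_congr rfl fun i _ => by ring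
    rw [h2, hYY, Matrix.trace_one]
    simp
  have hs1 : ∀ i, s i ≤ 1 := by
    intro i
    set P : Matrix (Fin n) (Fin n) ℝ := Y * Yᴴ with hP
    have hPP : P * P = P := by
      rw [hP]
      calc Y * Yᴴ * (Y * Yᴴ) = Y * (Yᴴ * Y) * Yᴴ := by
            simp only [Matrix.mul_assoc]
        _ = Y * Yᴴ := by rw [hYY, Matrix.mul_one]
    have hPsym : ∀ a b, P a b = P b a := by
      intro a b
      simp only [hP, Matrix.mul_apply, Matrix.conjTranspose_apply, star_trivial]
      exact Finset.sum_congr rfl fun j _ => by ring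
    have hPii : P i i = s i := by
      simp only [hP, Matrix.mul_apply, Matrix.conjTranspose_apply, star_trivial, hs]
      exact Finset.sum_congr rfl fun j _ => (sq (Y i j)) ▸ by ring
    have key : s i = ∑ j, (P i j)^2 := by
      conv_lhs => rw [← hPii]
      conv_lhs => rw [← hPP]
      simp only [Matrix.mul_apply]
      exact Finset.sum_congr rfl fun j _ => by rw [hPsym j i]; ring
    have hge : (P i i)^2 ≤ ∑ j, (P i j)^2 :=
      Finset.single_le_sum (f := fun j => (P i j)^2) (fun j _ => sq_nonneg _) (Finset.mem_univ i)
    rw [hPii] at hge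
    rw [← key] at hge
    nlinarith [hs0 i, hge]
  -- reindex and knapsack
  rw [htr]
  have hre : ∑ i, hM.eigenvalues i * s i
      = ∑ i, (eigVec M hM) i * (s ∘ (sortPerm hM)) i := by
    rw [eigVec_eq]
    exact (Equiv.sum_comp (sortPerm hM) (fun i => hM.eigenvalues i * s i)).symm
  rw [hre]
  apply knapsack hk _ _ (eigVec_antitone hM) (fun i => hs0 _) (fun i => hs1 _)
  rw [← hssum]
  exact Equiv.sum_comp (sortPerm hM) s

lemma achieve {k : ℕ} (hk : k ≤ n) (M : Matrix (Fin n) (Fin n) ℝ) (hM : M.IsHermitian) :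
    ∃ U : Matrix (Fin n) (Fin k) ℝ, Uᴴ * U = 1 ∧ (Uᴴ * M * U).trace = psum k (eigVec M hM) := by
  set W : Matrix (Fin n) (Fin n) ℝ := (hM.eigenvectorUnitary : Matrix (Fin n) (Fin n) ℝ) with hW
  have hWW' : Wᴴ * W = 1 := (Matrix.mem_unitaryGroup_iff').mp hM.eigenvectorUnitary.2
  have hdiag : Wᴴ * M * W = diagonal hM.eigenvalues := by
    have h := hM.conjStarAlgAut_star_eigenvectorUnitary; simp [Unitary.conjStarAlgAut_apply] at h; exact h
  set p : Fin k → Fin n := fun j => (sortPerm hM) (Fin.castLE hk j) with hp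
  have hpinj : Function.Injective p := fun a b h => by
    have := (sortPerm hM).injective h
    exact Fin.castLE_injective hk this
  refine ⟨W.submatrix id p, ?_, ?_⟩
  · have : (W.submatrix id p)ᴴ = Wᴴ.submatrix p id := by
      rw [Matrix.conjTranspose_submatrix]
    rw [this, ← Matrix.submatrix_mul Wᴴ W p id p Function.bijective_id, hWW']
    exact Matrix.submatrix_one p hpinj
  · have h1 : (W.submatrix id p)ᴴ * M * (W.submatrix id p)
        = (Wᴴ * M * W).submatrix p p := by
      rw [Matrix.conjTranspose_submatrix]
      calc Wᴴ.submatrix p id * M * W.submatrix id p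
          = (Wᴴ.submatrix p id * M.submatrix id id) * W.submatrix id p := by
            rw [Matrix.submatrix_id_id]
        _ = (Wᴴ * M).submatrix p id * W.submatrix id p := by
            rw [← Matrix.submatrix_mul Wᴴ M p id id Function.bijective_id]
        _ = (Wᴴ * M * W).submatrix p p := by
            rw [← Matrix.submatrix_mul (Wᴴ * M) W p id p Function.bijective_id]
    rw [h1, hdiag, Matrix.trace]
    have : ∀ j, ((diagonal hM.eigenvalues).submatrix p p).diag j = hM.eigenvalues (p j) := by
      intro j; simp [Matrix.diag_apply, Matrix.diagonal_apply]
    rw [Finset.sum_congr rfl fun j _ => this j, psum_eq_sum_castLE hk]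
    rfl

lemma ereal_combo (θ : ℝ) (h0 : 0 ≤ θ) (h1 : θ ≤ 1) (z : EReal) (hz : z ≠ ⊥) :
    (θ : EReal) * z + ((1 - θ : ℝ) : EReal) * z = z := by
  induction z with
  | bot => exact absurd rfl hz
  | coe r =>
    rw [← EReal.coe_mul, ← EReal.coe_mul, ← EReal.coe_add]
    norm_cast; ring
  | top =>
    rcases eq_or_lt_of_le h0 with hθ | hθ
    · rw [← hθ]; norm_num
    · rw [EReal.mul_top_of_pos (by exact_mod_cast hθ)]
      rcases eq_or_lt_of_le h1 with hθ1 | hθ1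
      · rw [← hθ1]; norm_num
      · rw [EReal.mul_top_of_pos (by exact_mod_cast (by linarith : (0:ℝ) < 1 - θ))]
        rfl

lemma schur (f : (Fin n → ℝ) → EReal)
    (hbot : ∀ z, f z ≠ ⊥)
    (hconv : ∀ x y : Fin n → ℝ, ∀ t : ℝ, 0 ≤ t → t ≤ 1 →
      f (t • x + (1 - t) • y) ≤ ((t : ℝ) : EReal) * f x + (((1 - t : ℝ)) : EReal) * f y)
    (hsymm : ∀ σ : Equiv.Perm (Fin n), ∀ x : Fin n → ℝ, f (x ∘ σ) = f x) :
    ∀ x y : Fin n → ℝ, Antitone x → Antitone y →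
      (∀ k, k ≤ n → psum k x ≤ psum k y) → (∑ i, x i = ∑ i, y i) → f x ≤ f y := by
  suffices H : ∀ m : ℕ, ∀ x y : Fin n → ℝ, Antitone x → Antitone y →
      (∀ k, k ≤ n → psum k x ≤ psum k y) → (∑ i, x i = ∑ i, y i) →
      (Finset.univ.filter (fun l => x l ≠ y l)).card ≤ m → f x ≤ f y by
    intro x y hx hy hps hsum
    exact H _ x y hx hy hps hsum le_rfl
  intro m
  induction m with
  | zero =>
    intro x y hx hy hps hsum hcard
    have : x = y := by
      funext l
      by_contra hne
      have : l ∈ Finset.univ.filter (fun l => x l ≠ y l) := by simp [hne]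
      have := Finset.card_pos.mpr ⟨l, this⟩
      omega
    rw [this]
  | succ m ih =>
    intro x y hx hy hps hsum hcard
    by_cases hxy : x = y
    · rw [hxy]
    -- find j : minimal index with y j < x j
    have hJ : (Finset.univ.filter (fun l => y l < x l)).Nonempty := by
      by_contra h
      rw [Finset.not_nonempty_iff_eq_empty] at h
      have hle : ∀ l, x l ≤ y l := by
        intro l
        by_contra hl
        have : l ∈ Finset.univ.filter (fun l => y l < x l) := by
          simp [lt_of_not_ge hl]
        simp [h] at this
      apply hxy
      funext l
      by_contra hne
      have : ∑ i, x i < ∑ i, y i :=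
        Finset.sum_lt_sum (fun i _ => hle i)
          ⟨l, Finset.mem_univ l, lt_of_le_of_ne (hle l) hne⟩
      linarith [hsum ▸ this]
    set j := (Finset.univ.filter (fun l => y l < x l)).min' hJ with hj
    have hjmem : y j < x j := by
      have := (Finset.univ.filter (fun l => y l < x l)).min'_mem hJ
      simpa using this
    have hjmin : ∀ l, l < j → x l ≤ y l := by
      intro l hl
      by_contra h
      have hmem : l ∈ Finset.univ.filter (fun l => y l < x l) := by
        simp [lt_of_not_ge h]
      exact absurd (Finset.min'_le _ l hmem) (not_le.mpr hl)
    -- find i : maximal index < j with x i < y i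
    have hI : (Finset.univ.filter (fun l => l < j ∧ x l < y l)).Nonempty := by
      by_contra h
      rw [Finset.not_nonempty_iff_eq_empty] at h
      have heq : ∀ l, l < j → x l = y l := by
        intro l hl
        refine le_antisymm (hjmin l hl) ?_
        by_contra hlt
        have : l ∈ Finset.univ.filter (fun l => l < j ∧ x l < y l) := by
          simp [hl, lt_of_not_ge hlt]
        simp [h] at this
      -- then psum (j+1) x ≤ psum (j+1) y forces x j ≤ y j, contradiction
      have h1 : psum ((j : ℕ) + 1) x ≤ psum ((j : ℕ) + 1) y := hps _ (by omega)
      rw [psum_succ j x, psum_succ j y] at h1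
      have h2 : psum (j : ℕ) x = psum (j : ℕ) y := by
        rw [psum, psum]
        apply Finset.sum_congr rfl
        intro l hl
        simp only [Finset.mem_filter, Finset.mem_univ, true_and] at hl
        exact heq l (by rwa [Fin.lt_def])
      rw [h2] at h1
      linarith
    set i := (Finset.univ.filter (fun l => l < j ∧ x l < y l)).max' hI with hi
    have himem : i < j ∧ x i < y i := by
      have h := (Finset.univ.filter (fun l => l < j ∧ x l < y l)).max'_mem hI
      rw [Finset.mem_filter] at h
      exact h.2
    have himax : ∀ l, i < l → l < j → x l = y l := by
      intro l hil hlj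
      refine le_antisymm (hjmin l hlj) ?_
      by_contra hlt
      have hmem : l ∈ Finset.univ.filter (fun l => l < j ∧ x l < y l) := by
        simp [hlj, lt_of_not_ge hlt]
      exact absurd (Finset.le_max' _ l hmem) (not_le.mpr hil)
    obtain ⟨hij, hxyi⟩ := himem
    have hxji : x j ≤ x i := hx hij.le
    have hyj : y j < y i := by linarith [hjmem]
    set δ : ℝ := min (y i - x i) (x j - y j) with hδdef
    have hδ : 0 < δ := lt_min (by linarith) (by linarith)
    have hδ1 : δ ≤ y i - x i := min_le_left _ _
    have hδ2 : δ ≤ x j - y j := min_le_right _ _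
    set y' : Fin n → ℝ := fun l => if l = i then y i - δ else if l = j then y j + δ else y l
      with hy'def
    have hy'i : y' i = y i - δ := by simp [hy'def]
    have hji : (j : Fin n) ≠ i := (ne_of_lt hij).symm
    have hy'j : y' j = y j + δ := by
      simp only [hy'def]
      rw [if_neg hji]
      simp
    have hy'other : ∀ l, l ≠ i → l ≠ j → y' l = y l := by
      intro l h1 h2; simp only [hy'def]; rw [if_neg h1, if_neg h2]
    have hdiff : ∀ l, y' l = y l + (if l = i then -δ else 0) + (if l = j then δ else 0) := by
      intro l
      by_cases h1 : l = i
      · subst h1; rw [hy'i, if_pos rfl, if_neg (ne_of_lt hij)]; ring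
      · by_cases h2 : l = j
        · subst h2; rw [hy'j, if_neg h1, if_pos rfl]; ring
        · rw [hy'other l h1 h2, if_neg h1, if_neg h2]; ring
    have hsum' : ∑ l, y' l = ∑ l, y l := by
      rw [Finset.sum_congr rfl (fun l _ => hdiff l)]
      rw [Finset.sum_add_distrib, Finset.sum_add_distrib,
        Finset.sum_ite_eq' Finset.univ i (fun _ => (-δ : ℝ)),
        Finset.sum_ite_eq' Finset.univ j (fun _ => (δ : ℝ))]
      simp
    have hpsum' : ∀ k : ℕ, psum k y' = psum k y + (if (i:ℕ) < k then -δ else 0)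
        + (if (j:ℕ) < k then δ else 0) := by
      intro k
      rw [psum, psum]
      rw [Finset.sum_congr rfl (fun l _ => hdiff l)]
      rw [Finset.sum_add_distrib, Finset.sum_add_distrib,
        Finset.sum_ite_eq' _ i (fun _ => (-δ : ℝ)),
        Finset.sum_ite_eq' _ j (fun _ => (δ : ℝ))]
      simp only [Finset.mem_filter, Finset.mem_univ, true_and]
    have hps' : ∀ k, k ≤ n → psum k x ≤ psum k y' := by
      intro k hk
      rw [hpsum' k]
      by_cases hik : (i : ℕ) < k
      · by_cases hjk : (j : ℕ) < k
        · rw [if_pos hik, if_pos hjk]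
          have := hps k hk
          linarith
        · rw [if_pos hik, if_neg hjk]
          have hkey : y i - x i ≤ psum k y - psum k x := by
            have heq : psum k y - psum k x
                = ∑ l ∈ Finset.univ.filter (fun l : Fin n => (l : ℕ) < k), (y l - x l) := by
              rw [psum, psum, ← Finset.sum_sub_distrib]
            rw [heq]
            apply Finset.single_le_sum (f := fun l => y l - x l)
            · intro l hl
              simp only [Finset.mem_filter, Finset.mem_univ, true_and] at hl
              have hlj : l < j := by
                rw [Fin.lt_def]; omega
              linarith [hjmin l hlj]
            · simp only [Finset.mem_filter, Finset.mem_univ, true_and]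
              exact hik
          linarith
      · have hjk : ¬ (j : ℕ) < k := by
          rw [Fin.lt_def] at hij; omega
        rw [if_neg hik, if_neg hjk]
        have := hps k hk
        linarith
    have hy'anti : Antitone y' := by
      intro a b hab
      rcases eq_or_lt_of_le hab with rfl | hab'
      · exact le_rfl
      by_cases hbi : b = i
      · subst hbi
        have hai : a ≠ i := ne_of_lt hab'
        have haj : a ≠ j := ne_of_lt (lt_trans hab' hij)
        rw [hy'i, hy'other a hai haj]
        have := hy hab
        linarith
      · by_cases hbj : b = j
        · subst hbj
          rw [hy'j]
          by_cases hai : a = i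
          · subst hai; rw [hy'i]; linarith
          · rw [hy'other a hai (ne_of_lt hab')]
            rcases lt_or_gt_of_ne hai with hlt | hgt
            · have := hy hlt.le
              linarith
            · have hxa : x a = y a := himax a hgt hab'
              have := hx hab'.le
              linarith
        · rw [hy'other b hbi hbj]
          by_cases hai : a = i
          · subst hai
            rcases lt_trichotomy b j with hbj' | hbj' | hbj'
            · have hxb : x b = y b := himax b hab' hbj'
              have := hx hab
              linarith
            · exact absurd hbj' hbj
            · have := hy hbj'.le
              linarith
          · by_cases haj : a = j
            · subst haj
              rw [hy'j]
              have := hy hab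
              linarith
            · rw [hy'other a hai haj]
              exact hy hab
    -- f y' ≤ f y via convexity and symmetry
    set θ : ℝ := δ / (y i - y j) with hθdef
    have hyij : (0:ℝ) < y i - y j := by linarith
    have hθ0 : 0 < θ := div_pos hδ hyij
    have hθ1 : θ ≤ 1 := by
      rw [div_le_one hyij]
      linarith
    have hswap : θ • (y ∘ (Equiv.swap i j)) + (1 - θ) • y = y' := by
      funext l
      simp only [Pi.add_apply, Pi.smul_apply, Function.comp_apply, smul_eq_mul]
      by_cases h1 : l = i
      · subst h1
        rw [Equiv.swap_apply_left, hy'i]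
        have : θ * (y i - y j) = δ := by
          rw [hθdef, div_mul_cancel₀ _ (ne_of_gt hyij)]
        linarith [this]
      · by_cases h2 : l = j
        · subst h2
          rw [Equiv.swap_apply_right, hy'j]
          have : θ * (y i - y j) = δ := by
            rw [hθdef, div_mul_cancel₀ _ (ne_of_gt hyij)]
          linarith [this]
        · rw [Equiv.swap_apply_of_ne_of_ne h1 h2, hy'other l h1 h2]
          ring
    have hfy' : f y' ≤ f y := by
      calc f y' = f (θ • (y ∘ (Equiv.swap i j)) + (1 - θ) • y) := by rw [hswap]
        _ ≤ (θ : EReal) * f (y ∘ (Equiv.swap i j)) + ((1 - θ : ℝ) : EReal) * f y :=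
            hconv _ _ θ hθ0.le hθ1
        _ = (θ : EReal) * f y + ((1 - θ : ℝ) : EReal) * f y := by
            rw [hsymm (Equiv.swap i j) y]
        _ = f y := ereal_combo θ hθ0.le hθ1 (f y) (hbot y)
    -- discrepancy set decreases
    have hsub : Finset.univ.filter (fun l => x l ≠ y' l)
        ⊆ Finset.univ.filter (fun l => x l ≠ y l) := by
      intro l hl
      simp only [Finset.mem_filter, Finset.mem_univ, true_and] at hl ⊢
      by_cases h1 : l = i
      · subst h1; exact ne_of_lt hxyi
      · by_cases h2 : l = j
        · subst h2; exact (ne_of_gt hjmem)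
        · rwa [← hy'other l h1 h2]
    have hssub : Finset.univ.filter (fun l => x l ≠ y' l)
        ⊂ Finset.univ.filter (fun l => x l ≠ y l) := by
      rw [Finset.ssubset_iff_of_subset hsub]
      by_cases hc : y i - x i ≤ x j - y j
      · refine ⟨i, ?_, ?_⟩
        · simp only [Finset.mem_filter, Finset.mem_univ, true_and]
          exact ne_of_lt hxyi
        · simp only [Finset.mem_filter, Finset.mem_univ, true_and, not_not, Decidable.not_not]
          rw [hy'i, hδdef, min_eq_left hc]
          ring
      · refine ⟨j, ?_, ?_⟩
        · simp only [Finset.mem_filter, Finset.mem_univ, true_and]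
          exact ne_of_gt hjmem
        · simp only [Finset.mem_filter, Finset.mem_univ, true_and, not_not, Decidable.not_not]
          rw [hy'j, hδdef, min_eq_right (le_of_not_ge hc)]
          ring
    have hcard' : (Finset.univ.filter (fun l => x l ≠ y' l)).card ≤ m := by
      have := Finset.card_lt_card hssub
      omega
    exact le_trans (ih x y' hx hy'anti hps' (hsum.trans hsum'.symm) hcard') hfy'

end Spec

namespace Spec
variable {n : ℕ}

lemma psum_add (k : ℕ) (x y : Fin n → ℝ) : psum k (x + y) = psum k x + psum k y := by
  rw [psum, psum, psum, ← Finset.sum_add_distrib]; rfl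

lemma psum_smul (k : ℕ) (t : ℝ) (x : Fin n → ℝ) : psum k (t • x) = t * psum k x := by
  rw [psum, psum, Finset.mul_sum]; rfl

lemma psum_abs_le (k : ℕ) (x : Fin n → ℝ) : |psum k x| ≤ ∑ i, |x i| := by
  rw [psum]
  refine (Finset.abs_sum_le_sum_abs _ _).trans ?_
  exact Finset.sum_le_sum_of_subset_of_nonneg (Finset.filter_subset _ _)
    (fun i _ _ => abs_nonneg _)

lemma kyFan {k : ℕ} (hk : k ≤ n) (A B : Matrix (Fin n) (Fin n) ℝ)
    (hA : A.IsHermitian) (hB : B.IsHermitian) (hAB : (A + B).IsHermitian) :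
    psum k (eigVec (A + B) hAB) ≤ psum k (eigVec A hA) + psum k (eigVec B hB) := by
  obtain ⟨U, hU, htr⟩ := achieve hk (A + B) hAB
  have hsplit : Uᴴ * (A + B) * U = Uᴴ * A * U + Uᴴ * B * U := by
    rw [Matrix.mul_add, Matrix.add_mul]
  rw [← htr, hsplit, Matrix.trace_add]
  exact add_le_add (trace_bound hk A hA U hU) (trace_bound hk B hB U hU)

lemma eigVec_smul_psum {k : ℕ} (hk : k ≤ n) (t : ℝ) (ht : 0 ≤ t)
    (V : Matrix (Fin n) (Fin n) ℝ) (hV : V.IsHermitian) (htV : (t • V).IsHermitian) :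
    psum k (eigVec (t • V) htV) = t * psum k (eigVec V hV) := by
  have hsmul : ∀ (U : Matrix (Fin n) (Fin k) ℝ),
      (Uᴴ * (t • V) * U).trace = t * (Uᴴ * V * U).trace := by
    intro U
    rw [Matrix.mul_smul, Matrix.smul_mul, Matrix.trace_smul]
    simp
  apply le_antisymm
  · obtain ⟨U, hU, htr⟩ := achieve hk (t • V) htV
    rw [← htr, hsmul U]
    exact mul_le_mul_of_nonneg_left (trace_bound hk V hV U hU) ht
  · obtain ⟨U, hU, htr⟩ := achieve hk V hV
    rw [← htr, ← hsmul U]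
    exact trace_bound hk (t • V) htV U hU

lemma sum_eigVec_eq_trace (M : Matrix (Fin n) (Fin n) ℝ) (hM : M.IsHermitian) :
    ∑ i, eigVec M hM i = M.trace := by
  rw [eigVec_eq]
  rw [show ∑ i, (hM.eigenvalues ∘ (sortPerm hM)) i = ∑ i, hM.eigenvalues i from
    Equiv.sum_comp (sortPerm hM) hM.eigenvalues]
  -- trace M = sum of eigenvalues
  set W : Matrix (Fin n) (Fin n) ℝ := (hM.eigenvectorUnitary : Matrix (Fin n) (Fin n) ℝ) with hW
  have hWW' : Wᴴ * W = 1 := (Matrix.mem_unitaryGroup_iff').mp hM.eigenvectorUnitary.2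
  have hMspec : M = W * diagonal hM.eigenvalues * Wᴴ := by
    have h := hM.spectral_theorem; simp at h; exact h
  have : M.trace = (diagonal hM.eigenvalues).trace := by
    calc M.trace = (W * diagonal hM.eigenvalues * Wᴴ).trace := by rw [← hMspec]
      _ = ((Wᴴ * W) * diagonal hM.eigenvalues).trace := by rw [Matrix.trace_mul_cycle]
      _ = (diagonal hM.eigenvalues).trace := by rw [hWW', Matrix.one_mul]
  rw [this, Matrix.trace_diagonal]

lemma psum_univ (x : Fin n → ℝ) : psum n x = ∑ i, x i := by
  rw [psum, Finset.filter_true_of_mem]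
  intro i _; exact i.2

lemma herm_smul (t : ℝ) {V : Matrix (Fin n) (Fin n) ℝ} (hV : V.IsHermitian) :
    (t • V).IsHermitian := by
  unfold Matrix.IsHermitian at *
  rw [Matrix.conjTranspose_smul, hV, star_trivial]

lemma eigVec_congr {A B : Matrix (Fin n) (Fin n) ℝ} (h : A = B)
    (hA : A.IsHermitian) (hB : B.IsHermitian) : eigVec A hA = eigVec B hB := by
  subst h; rfl

lemma lscBound (f : (Fin n → ℝ) → EReal) (hlsc : LowerSemicontinuous f)
    (p : Fin n → ℝ) (z : ℕ → (Fin n → ℝ)) (β : ℕ → ℝ) (B : ℝ)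
    (hz : Tendsto z atTop (𝓝 p)) (hβ : Tendsto β atTop (𝓝 B))
    (hfz : ∀ m, f (z m) ≤ ((β m : ℝ) : EReal)) : f p ≤ ((B : ℝ) : EReal) := by
  by_contra hcon
  push_neg at hcon
  obtain ⟨yv, hy1, hy2⟩ := exists_between hcon
  have hytop : yv ≠ ⊤ := by
    intro h
    rw [h] at hy2
    exact absurd hy2 (not_top_lt)
  have hybot : yv ≠ ⊥ := by
    intro h
    rw [h] at hy1
    exact absurd hy1 (not_lt_bot)
  set r : ℝ := yv.toReal with hr
  have hyr : yv = (r : EReal) := (EReal.coe_toReal hytop hybot).symm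
  have hev1 : ∀ᶠ m in atTop, yv < f (z m) := hz.eventually (hlsc p yv hy2)
  have hBr : B < r := by
    rw [hyr] at hy1
    exact_mod_cast hy1
  have hev2 : ∀ᶠ m in atTop, β m < r := hβ.eventually_lt_const hBr
  obtain ⟨m, hm1, hm2⟩ := (hev1.and hev2).exists
  have : yv < (r : EReal) := lt_of_lt_of_le hm1 ((hfz m).trans (by exact_mod_cast hm2.le))
  rw [hyr] at this
  exact lt_irrefl _ this

lemma ereal_mul_le_coe (r x : ℝ) (hr : 0 ≤ r) (a : EReal) (ha : a ≠ ⊥)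
    (h : a ≤ ((x : ℝ) : EReal)) : (r : EReal) * a ≤ ((r * x : ℝ) : EReal) := by
  induction a with
  | bot => exact absurd rfl ha
  | coe q =>
    rw [← EReal.coe_mul]
    exact_mod_cast mul_le_mul_of_nonneg_left (by exact_mod_cast h) hr
  | top => exact absurd h (not_le.mpr (EReal.coe_lt_top x))

/-- base-point transfer for recession bounds -/
lemma transfer (f : (Fin n → ℝ) → EReal)
    (hconv : ∀ x y : Fin n → ℝ, ∀ t : ℝ, 0 ≤ t → t ≤ 1 →
      f (t • x + (1 - t) • y) ≤ ((t : ℝ) : EReal) * f x + (((1 - t : ℝ)) : EReal) * f y)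
    (hlsc : LowerSemicontinuous f) (hbot : ∀ z, f z ≠ ⊥)
    (p q u : Fin n → ℝ) (cp dq K : ℝ) (hp : f p = (cp : EReal)) (hq : f q = (dq : EReal))
    (hK : ∀ s : ℝ, 0 < s → f (q + s • u) ≤ ((dq + s * K : ℝ) : EReal)) :
    ∀ s : ℝ, 0 < s → f (p + s • u) ≤ ((cp + s * K : ℝ) : EReal) := by
  intro s hs
  set lam : ℕ → ℝ := fun m => 1 / (m + 1 : ℝ) with hlam
  have hlam0 : ∀ m, 0 < lam m := fun m => by positivity
  have hlam1 : ∀ m, lam m ≤ 1 := by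
    intro m
    rw [hlam]
    rw [div_le_one (by positivity)]
    simp
  set z : ℕ → (Fin n → ℝ) := fun m => (lam m) • (q + (s * (m + 1)) • u) + (1 - lam m) • p
    with hz
  set β : ℕ → ℝ := fun m => lam m * (dq + s * (m + 1) * K) + (1 - lam m) * cp with hβ
  have hzval : ∀ m, z m = (p + s • u) + (lam m) • (q - p) := by
    intro m
    funext l
    simp only [hz, Pi.add_apply, Pi.smul_apply, Pi.sub_apply, smul_eq_mul, hlam]
    have : (m + 1 : ℝ) ≠ 0 := by positivity
    field_simp
    ring
  have hβval : ∀ m, β m = (cp + s * K) + (lam m) * (dq - cp) := by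
    intro m
    simp only [hβ, hlam]
    have : (m + 1 : ℝ) ≠ 0 := by positivity
    field_simp
    ring
  have hztend : Tendsto z atTop (𝓝 (p + s • u)) := by
    rw [show (p + s • u) = (p + s • u) + (0 : ℝ) • (q - p) by simp]
    have h1 : Tendsto lam atTop (𝓝 0) := by
      rw [hlam]
      exact tendsto_one_div_add_atTop_nhds_zero_nat
    have h2 : Tendsto (fun m => (lam m) • (q - p)) atTop (𝓝 ((0:ℝ) • (q - p))) :=
      h1.smul_const (q - p)
    have := (tendsto_const_nhds (x := p + s • u) (f := atTop)).add h2
    simpa only [← hzval] using this.congr (fun m => (hzval m).symm)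
  have hβtend : Tendsto β atTop (𝓝 (cp + s * K)) := by
    rw [show (cp + s * K) = (cp + s * K) + (0:ℝ) * (dq - cp) by ring]
    have h1 : Tendsto lam atTop (𝓝 0) := tendsto_one_div_add_atTop_nhds_zero_nat
    have h2 := h1.mul_const (dq - cp)
    have := (tendsto_const_nhds (x := cp + s * K) (f := atTop)).add h2
    exact this.congr (fun m => (hβval m).symm)
  apply lscBound f hlsc _ z β _ hztend hβtend
  intro m
  have hcv := hconv (q + (s * (m + 1)) • u) p (lam m) (hlam0 m).le (hlam1 m)
  rw [hp] at hcv
  have harg : f (q + (s * (m + 1)) • u) ≤ ((dq + s * (m + 1) * K : ℝ) : EReal) := by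
    exact hK (s * (m + 1)) (by positivity)
  have h1 : ((lam m : ℝ) : EReal) * f (q + (s * (m + 1)) • u)
      ≤ ((lam m * (dq + s * (m + 1) * K) : ℝ) : EReal) :=
    ereal_mul_le_coe _ _ (hlam0 m).le _ (hbot _) harg
  have h2 : (((1 - lam m : ℝ)) : EReal) * ((cp : ℝ) : EReal)
      = (((1 - lam m) * cp : ℝ) : EReal) := by
    rw [← EReal.coe_mul]
  calc f (z m) ≤ ((lam m : ℝ) : EReal) * f (q + (s * (m + 1)) • u)
        + (((1 - lam m : ℝ)) : EReal) * ((cp : ℝ) : EReal) := hcv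
    _ ≤ ((lam m * (dq + s * (m + 1) * K) : ℝ) : EReal)
        + (((1 - lam m) * cp : ℝ) : EReal) := by
        rw [h2]
        exact add_le_add h1 le_rfl
    _ = ((β m : ℝ) : EReal) := by
        rw [← EReal.coe_add]

lemma term_bot_lt (t c : ℝ) (ht : 0 < t) (z : EReal) (hz : z ≠ ⊥) :
    (⊥ : EReal) < ((t⁻¹ : ℝ) : EReal) * z + (((-c) / t : ℝ) : EReal) := by
  induction z with
  | bot => exact absurd rfl hz
  | coe r =>
    rw [← EReal.coe_mul, ← EReal.coe_add]
    exact EReal.bot_lt_coe _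
  | top =>
    rw [EReal.coe_mul_top_of_pos (by positivity), EReal.top_add_of_ne_bot (EReal.coe_ne_bot _)]
    exact bot_lt_top

lemma term_le_iff (t c K : ℝ) (ht : 0 < t) (z : EReal) (hz : z ≠ ⊥) :
    ((t⁻¹ : ℝ) : EReal) * z + (((-c) / t : ℝ) : EReal) ≤ ((K : ℝ) : EReal)
      ↔ z ≤ ((c + t * K : ℝ) : EReal) := by
  induction z with
  | bot => exact absurd rfl hz
  | coe r =>
    rw [← EReal.coe_mul, ← EReal.coe_add, EReal.coe_le_coe_iff, EReal.coe_le_coe_iff]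
    have harith : t⁻¹ * r + (-c) / t = (r - c) / t := by
      field_simp
      ring
    rw [harith, div_le_iff₀ ht]
    constructor <;> intro h <;> nlinarith
  | top =>
    rw [EReal.coe_mul_top_of_pos (by positivity), EReal.top_add_of_ne_bot (EReal.coe_ne_bot _)]
    constructor <;> intro h
    · exact absurd h (not_le.mpr (EReal.coe_lt_top _))
    · exact absurd h (not_le.mpr (EReal.coe_lt_top _))

end Spec

open Spec in
theorem stmt10 (n : ℕ) (f : (Fin n → ℝ) → EReal)
    (hproper : ∃ z, f z ≠ ⊤) (hbot : ∀ z, f z ≠ ⊥)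
    (hconv : ∀ x y : Fin n → ℝ, ∀ t : ℝ, 0 ≤ t → t ≤ 1 →
      f (t • x + (1 - t) • y) ≤ ((t : ℝ) : EReal) * f x + (((1 - t : ℝ)) : EReal) * f y)
    (hlsc : LowerSemicontinuous f)
    (hsymm : ∀ σ : Equiv.Perm (Fin n), ∀ x : Fin n → ℝ, f (x ∘ σ) = f x)
    (X₀ V : Matrix (Fin n) (Fin n) ℝ) (hX₀ : X₀.IsHermitian) (hV : V.IsHermitian)
    (x₀ : Fin n → ℝ) (c d : ℝ)
    (hFX₀ : specFun f X₀ = (c : EReal)) (hfx₀ : f x₀ = (d : EReal)) :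
    (⨆ t ∈ Set.Ioi (0 : ℝ),
        (((t⁻¹ : ℝ) : EReal) * specFun f (X₀ + t • V) + (((-c) / t : ℝ) : EReal))) =
      ⨆ t ∈ Set.Ioi (0 : ℝ),
        (((t⁻¹ : ℝ) : EReal) * f (x₀ + t • eigVec V hV) + (((-d) / t : ℝ) : EReal)) := by
  classical
  set u : Fin n → ℝ := eigVec V hV with hu
  set w : Fin n → ℝ := eigVec X₀ hX₀ with hw
  have hfw : f w = (c : EReal) := by
    rw [← hFX₀, specFun, dif_pos hX₀]
  have hherm : ∀ t : ℝ, (X₀ + t • V).IsHermitian := fun t => hX₀.add (herm_smul t hV)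
  have hspec : ∀ t : ℝ, specFun f (X₀ + t • V) = f (eigVec _ (hherm t)) := by
    intro t
    rw [specFun, dif_pos (hherm t)]
  set a : ℝ → (Fin n → ℝ) := fun t => eigVec (X₀ + t • V) (hherm t) with ha
  -- upper partial sums comparison
  have hub : ∀ t : ℝ, 0 ≤ t → ∀ k, k ≤ n → psum k (a t) ≤ psum k w + t * psum k u := by
    intro t ht k hk
    have h2 := kyFan hk X₀ (t • V) hX₀ (herm_smul t hV) (hherm t)
    have h3 := eigVec_smul_psum hk t ht V hV (herm_smul t hV)
    rw [← hu] at h3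
    rw [← hw] at h2
    linarith
  -- majorization comparison via Schur convexity
  have hmaj : ∀ t : ℝ, 0 ≤ t → f (a t) ≤ f (w + t • u) := by
    intro t ht
    have hanti : Antitone (w + t • u) := by
      intro p q hpq
      simp only [Pi.add_apply, Pi.smul_apply, smul_eq_mul]
      have h1 := eigVec_antitone hX₀ hpq
      have h2 := eigVec_antitone hV hpq
      rw [← hw] at h1
      rw [← hu] at h2
      have := mul_le_mul_of_nonneg_left h2 ht
      linarith
    have hps : ∀ k, k ≤ n → psum k (a t) ≤ psum k (w + t • u) := by
      intro k hk
      rw [psum_add, psum_smul]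
      exact hub t ht k hk
    have htot : ∑ i, a t i = ∑ i, (w + t • u) i := by
      have h1 : ∑ i, a t i = (X₀ + t • V).trace := sum_eigVec_eq_trace _ (hherm t)
      have h2 : ∑ i, w i = X₀.trace := sum_eigVec_eq_trace _ hX₀
      have h3 : ∑ i, u i = V.trace := sum_eigVec_eq_trace _ hV
      have h4 : ∑ i, (w + t • u) i = ∑ i, w i + t * ∑ i, u i := by
        rw [Finset.mul_sum, ← Finset.sum_add_distrib]
        rfl
      rw [h1, h4, h2, h3, Matrix.trace_add, Matrix.trace_smul]
      rfl
    exact schur f hbot hconv hsymm (a t) (w + t • u) (eigVec_antitone _) hanti hps htot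
  -- boundedness of a r - r • u
  set C : ℝ := (∑ i, |w i|) + (∑ i, |eigVec (-X₀) hX₀.neg i|) with hC
  have habs1 : ∀ k : ℕ, psum k w ≤ C := by
    intro k
    have h1 := psum_abs_le k w
    have h2 : (0:ℝ) ≤ ∑ i, |eigVec (-X₀) hX₀.neg i| :=
      Finset.sum_nonneg fun i _ => abs_nonneg _
    have := (le_abs_self (psum k w)).trans h1
    rw [hC]; linarith
  have habs2 : ∀ k : ℕ, psum k (eigVec (-X₀) hX₀.neg) ≤ C := by
    intro k
    have h1 := psum_abs_le k (eigVec (-X₀) hX₀.neg)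
    have h2 : (0:ℝ) ≤ ∑ i, |w i| := Finset.sum_nonneg fun i _ => abs_nonneg _
    have := (le_abs_self _).trans h1
    rw [hC]; linarith
  have hCpos : 0 ≤ C := le_trans (by simp [psum]) (habs1 0)
  have hpsbd : ∀ r : ℝ, 0 ≤ r → ∀ k, k ≤ n → |psum k (a r) - r * psum k u| ≤ C := by
    intro r hr k hk
    have h1 := hub r hr k hk
    have hEq : (X₀ + r • V) + (-X₀) = r • V := by abel
    have h4 := kyFan hk (X₀ + r • V) (-X₀) (hherm r) hX₀.neg
      (by rw [hEq]; exact herm_smul r hV)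
    rw [eigVec_congr hEq _ (herm_smul r hV)] at h4
    have h3 := eigVec_smul_psum hk r hr V hV (herm_smul r hV)
    rw [← hu] at h3
    rw [h3] at h4
    rw [abs_le]
    constructor
    · have := habs2 k
      linarith
    · have := habs1 k
      linarith
  have hbd : ∀ r : ℝ, 0 ≤ r → ∀ l : Fin n, |a r l - r * u l| ≤ 2 * C := by
    intro r hr l
    have h5 := hpsbd r hr ((l : ℕ) + 1) (by omega)
    have h6 := hpsbd r hr (l : ℕ) (by omega)
    rw [psum_succ l (a r), psum_succ l u] at h5
    rw [abs_le] at h5 h6 ⊢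
    constructor <;> nlinarith [h5.1, h5.2, h6.1, h6.2]
  -- the two suprema
  apply le_antisymm
  · -- LHS ≤ RHS
    refine iSup₂_le ?_
    intro t ht
    rw [Set.mem_Ioi] at ht
    rw [hspec t]
    by_cases hT : (⨆ s ∈ Set.Ioi (0 : ℝ),
        (((s⁻¹ : ℝ) : EReal) * f (x₀ + s • eigVec V hV) + (((-d) / s : ℝ) : EReal))) = ⊤
    · rw [hT]; exact le_top
    have hRlb : (⊥ : EReal) < ⨆ s ∈ Set.Ioi (0 : ℝ),
        (((s⁻¹ : ℝ) : EReal) * f (x₀ + s • eigVec V hV) + (((-d) / s : ℝ) : EReal)) := by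
      refine lt_of_lt_of_le (term_bot_lt 1 d one_pos (f (x₀ + (1:ℝ) • eigVec V hV)) (hbot _)) ?_
      exact le_biSup (fun s => (((s⁻¹ : ℝ) : EReal) * f (x₀ + s • eigVec V hV)
        + (((-d) / s : ℝ) : EReal))) (Set.mem_Ioi.mpr one_pos)
    set K : ℝ := (⨆ s ∈ Set.Ioi (0 : ℝ),
        (((s⁻¹ : ℝ) : EReal) * f (x₀ + s • eigVec V hV) + (((-d) / s : ℝ) : EReal))).toReal
      with hKdef
    have hRK : (⨆ s ∈ Set.Ioi (0 : ℝ),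
        (((s⁻¹ : ℝ) : EReal) * f (x₀ + s • eigVec V hV) + (((-d) / s : ℝ) : EReal)))
        = (K : EReal) := (EReal.coe_toReal hT hRlb.ne').symm
    have hKb : ∀ s : ℝ, 0 < s → f (x₀ + s • u) ≤ ((d + s * K : ℝ) : EReal) := by
      intro s hs
      have hle := le_biSup (fun s => (((s⁻¹ : ℝ) : EReal) * f (x₀ + s • eigVec V hV)
        + (((-d) / s : ℝ) : EReal))) (Set.mem_Ioi.mpr hs)
      rw [hRK] at hle
      exact (term_le_iff s d K hs _ (hbot _)).mp hle
    have hwb := transfer f hconv hlsc hbot w x₀ u c d K hfw hfx₀ hKb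
    rw [hRK]
    refine (term_le_iff t c K ht _ (hbot _)).mpr ?_
    exact (hmaj t ht.le).trans (hwb t ht)
  · -- RHS ≤ LHS
    refine iSup₂_le ?_
    intro s hs
    rw [Set.mem_Ioi] at hs
    by_cases hT : (⨆ t ∈ Set.Ioi (0 : ℝ),
        (((t⁻¹ : ℝ) : EReal) * specFun f (X₀ + t • V) + (((-c) / t : ℝ) : EReal))) = ⊤
    · rw [hT]; exact le_top
    have hLlb : (⊥ : EReal) < ⨆ t ∈ Set.Ioi (0 : ℝ),
        (((t⁻¹ : ℝ) : EReal) * specFun f (X₀ + t • V) + (((-c) / t : ℝ) : EReal)) := by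
      refine lt_of_lt_of_le (term_bot_lt 1 c one_pos (specFun f (X₀ + (1:ℝ) • V))
        (by rw [hspec 1]; exact hbot _)) ?_
      exact le_biSup (fun t => (((t⁻¹ : ℝ) : EReal) * specFun f (X₀ + t • V)
        + (((-c) / t : ℝ) : EReal))) (Set.mem_Ioi.mpr one_pos)
    set K : ℝ := (⨆ t ∈ Set.Ioi (0 : ℝ),
        (((t⁻¹ : ℝ) : EReal) * specFun f (X₀ + t • V) + (((-c) / t : ℝ) : EReal))).toReal
      with hKdef
    have hLK : (⨆ t ∈ Set.Ioi (0 : ℝ),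
        (((t⁻¹ : ℝ) : EReal) * specFun f (X₀ + t • V) + (((-c) / t : ℝ) : EReal)))
        = (K : EReal) := (EReal.coe_toReal hT hLlb.ne').symm
    have hKb : ∀ r : ℝ, 0 < r → f (a r) ≤ ((c + r * K : ℝ) : EReal) := by
      intro r hr
      have hle : ((r⁻¹ : ℝ) : EReal) * specFun f (X₀ + r • V) + (((-c) / r : ℝ) : EReal)
          ≤ ⨆ t ∈ Set.Ioi (0 : ℝ),
            (((t⁻¹ : ℝ) : EReal) * specFun f (X₀ + t • V) + (((-c) / t : ℝ) : EReal)) :=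
        le_biSup (fun t => (((t⁻¹ : ℝ) : EReal) * specFun f (X₀ + t • V)
          + (((-c) / t : ℝ) : EReal))) (Set.mem_Ioi.mpr hr)
      rw [hLK, hspec r] at hle
      exact (term_le_iff r c K hr _ (hbot _)).mp hle
    -- recession bound at base w via lsc
    have hwK : ∀ s' : ℝ, 0 < s' → f (w + s' • u) ≤ ((c + s' * K : ℝ) : EReal) := by
      intro s' hs'
      set lam : ℕ → ℝ := fun m => 1 / (m + 1 : ℝ) with hlam
      have hlam0 : ∀ m, 0 < lam m := fun m => by positivity
      have hlam1 : ∀ m, lam m ≤ 1 := by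
        intro m
        rw [hlam, div_le_one (by positivity)]
        simp
      set ρ : ℕ → ℝ := fun m => s' * (m + 1) with hρ
      have hρpos : ∀ m, 0 < ρ m := fun m => by positivity
      have hlamρ : ∀ m, lam m * ρ m = s' := by
        intro m
        rw [hlam, hρ]
        field_simp
      set z : ℕ → (Fin n → ℝ) := fun m => (lam m) • a (ρ m) + (1 - lam m) • w with hz
      have hztend : Tendsto z atTop (𝓝 (w + s' • u)) := by
        rw [tendsto_pi_nhds]
        intro l
        have hzl : ∀ m, z m l = (w l + s' * u l)
            + lam m * (a (ρ m) l - ρ m * u l - w l) := by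
          intro m
          simp only [hz, Pi.add_apply, Pi.smul_apply, smul_eq_mul]
          have hh := hlamρ m
          linear_combination u l * hh
        have h1 : Tendsto lam atTop (𝓝 0) := tendsto_one_div_add_atTop_nhds_zero_nat
        have h2 : Tendsto (fun m => lam m * (a (ρ m) l - ρ m * u l - w l)) atTop (𝓝 0) := by
          have hbound : ∀ m, ‖lam m * (a (ρ m) l - ρ m * u l - w l)‖
              ≤ lam m * (2 * C + |w l|) := by
            intro m
            rw [Real.norm_eq_abs, abs_mul, abs_of_pos (hlam0 m)]
            refine mul_le_mul_of_nonneg_left ?_ (hlam0 m).le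
            have := hbd (ρ m) (hρpos m).le l
            calc |a (ρ m) l - ρ m * u l - w l|
                ≤ |a (ρ m) l - ρ m * u l| + |w l| := abs_sub _ _
              _ ≤ 2 * C + |w l| := by linarith
          have htend0 : Tendsto (fun m => lam m * (2 * C + |w l|)) atTop (𝓝 0) := by
            have := h1.mul_const (2 * C + |w l|)
            rwa [zero_mul] at this
          exact squeeze_zero_norm hbound htend0
        have := (tendsto_const_nhds (x := w l + s' * u l) (f := atTop)).add h2
        simp only [add_zero] at this
        refine this.congr fun m => ?_
        rw [← hzl m]
      have hβtend : Tendsto (fun _ : ℕ => (c + s' * K : ℝ)) atTop (𝓝 (c + s' * K)) :=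
        tendsto_const_nhds
      refine lscBound f hlsc _ z _ _ hztend hβtend ?_
      intro m
      have hcv := hconv (a (ρ m)) w (lam m) (hlam0 m).le (hlam1 m)
      rw [hfw] at hcv
      have h1 : ((lam m : ℝ) : EReal) * f (a (ρ m))
          ≤ ((lam m * (c + ρ m * K) : ℝ) : EReal) :=
        ereal_mul_le_coe _ _ (hlam0 m).le _ (hbot _) (hKb (ρ m) (hρpos m))
      have h2 : (((1 - lam m : ℝ)) : EReal) * ((c : ℝ) : EReal)
          = (((1 - lam m) * c : ℝ) : EReal) := by rw [← EReal.coe_mul]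
      have h3 : lam m * (c + ρ m * K) + (1 - lam m) * c = c + s' * K := by
        have h4 : lam m * (ρ m * K) = s' * K := by
          rw [← mul_assoc, hlamρ m]
        nlinarith [h4]
      calc f (z m) ≤ ((lam m : ℝ) : EReal) * f (a (ρ m))
            + (((1 - lam m : ℝ)) : EReal) * ((c : ℝ) : EReal) := hcv
        _ ≤ ((lam m * (c + ρ m * K) : ℝ) : EReal) + (((1 - lam m) * c : ℝ) : EReal) := by
            rw [h2]
            exact add_le_add h1 le_rfl
        _ = ((c + s' * K : ℝ) : EReal) := by
            rw [← EReal.coe_add, h3]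
    have hxb := transfer f hconv hlsc hbot x₀ w u d c K hfx₀ hfw hwK
    rw [hLK]
    refine (term_le_iff s d K hs _ (hbot _)).mpr ?_
    exact hxb s hs
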